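/- Assume that n exists. Then for every integer l with 1 ≤ l ≤ n − 1 one has A_l ⊆ K°; that is, for every b ∈ ℤ^s with 0 ≤ b < α and |α − b| ≥ 2, the element β − lα + b lies in K and satisfies β − lα + b < β. -/

import Mathlib

open Finset Pointwise

/-- Elements of `ℤ^s`, compared componentwise. -/
abbrev Vec (s : ℕ) := Fin s → ℤ

/-- A good local semigroup `S ⊆ ℕ^s` (encoded as a set of nonnegative vectors of `ℤ^s`):
`0 ∈ S`, `S + S ⊆ S`, closure under componentwise minima (G1), property (G2),
existence of a conductor (G3), and locality (G4). -/
def GoodLocal {s : ℕ} (S : Set (Vec s)) : Prop :=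
  (∀ a ∈ S, 0 ≤ a) ∧
  (0 : Vec s) ∈ S ∧
  (∀ a ∈ S, ∀ b ∈ S, a + b ∈ S) ∧
  (∀ a ∈ S, ∀ b ∈ S, a ⊓ b ∈ S) ∧
  (∀ a ∈ S, ∀ b ∈ S, ∀ i : Fin s, a i = b i →
    ∃ ε ∈ S, a i < ε i ∧
      ∀ j : Fin s, j ≠ i → min (a j) (b j) ≤ ε j ∧ (a j ≠ b j → ε j = min (a j) (b j))) ∧
  (∃ c : Vec s, 0 ≤ c ∧ ∀ x : Vec s, 0 ≤ x → c + x ∈ S) ∧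
  (∀ a ∈ S, (∃ i, a i = 0) → a = 0)

/-- `Δ^S(a) = {b ∈ S : b_i = a_i for some i, and b_j > a_j for all j ≠ i}`. -/
def Delta {s : ℕ} (S : Set (Vec s)) (a : Vec s) : Set (Vec s) :=
  {b ∈ S | ∃ i : Fin s, b i = a i ∧ ∀ j : Fin s, j ≠ i → a j < b j}

/-- The canonical ideal `K = {a ∈ ℤ^s : Δ^S(γ - a) = ∅}` where `γ = β - (1,…,1)`. -/
def Kideal {s : ℕ} (S : Set (Vec s)) (β : Vec s) : Set (Vec s) :=
  {a : Vec s | Delta S (β - 1 - a) = ∅}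

/-- `K° = {a ∈ K : a < β}`. -/
def Kcirc {s : ℕ} (S : Set (Vec s)) (β : Vec s) : Set (Vec s) :=
  {a ∈ Kideal S β | a < β}

/-- `R_i = {a ∈ ℕ^s : (i-1)α < a < iα}`. -/
def Rset {s : ℕ} (α : Vec s) (i : ℤ) : Set (Vec s) :=
  {a : Vec s | 0 ≤ a ∧ (i - 1) • α < a ∧ a < i • α}

/-- For `1 ≤ l ≤ n - 1`, the set `A_l = {β - lα + b : 0 ≤ b < α, |α - b| ≥ 2}`
is contained in `K°`. -/
theorem A_l_subset_Kcirc
    (s : ℕ) (hs : 1 ≤ s) (S : Set (Vec s)) (hS : GoodLocal S)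
    (hSne : S ≠ {a : Vec s | 0 ≤ a}) (α β : Vec s)
    (hα₁ : α ∈ S) (hα₂ : α ≠ 0) (hα₃ : ∀ a ∈ S, a ≠ 0 → α ≤ a)
    (hβ₁ : 0 ≤ β) (hβ₂ : ∀ x : Vec s, 0 ≤ x → β + x ∈ S)
    (hβ₃ : ∀ c : Vec s, 0 ≤ c → (∀ x : Vec s, 0 ≤ x → c + x ∈ S) → β ≤ c)
    (m : ℤ) (hm₁ : (m + 1) • α ≤ β) (hm₂ : ∀ m' : ℤ, (m' + 1) • α ≤ β → m' ≤ m)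
    (n : ℤ) (hn₁ : 1 ≤ n) (hn₂ : (Rset α n ∩ S).Nonempty)
    (hn₃ : ∀ n' : ℤ, 1 ≤ n' → (Rset α n' ∩ S).Nonempty → n ≤ n') :
    ∀ l : ℤ, 1 ≤ l → l ≤ n - 1 →
      ∀ b : Vec s, 0 ≤ b → b < α → 2 ≤ ∑ t, (α t - b t) →
        β - l • α + b ∈ Kideal S β ∧ β - l • α + b < β := by
  obtain ⟨hpos, h0, hadd, hmin, hG2, hG3, hG4⟩ := hS
  have hα0 : ∀ t, 0 ≤ α t := fun t => hpos α hα₁ t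
  have hαpos : ∀ t, 1 ≤ α t := by
    intro t
    rcases lt_or_ge (α t) 1 with h | h
    · exact absurd (hG4 α hα₁ ⟨t, le_antisymm (by omega) (hα0 t)⟩) hα₂
    · exact h
  have hmulN : ∀ k : ℕ, ((k : ℤ)) • α ∈ S := by
    intro k
    induction k with
    | zero => simpa using h0
    | succ k ih =>
      have h : (((k : ℕ) + 1 : ℕ) : ℤ) • α = (k : ℤ) • α + α := by
        push_cast
        rw [add_smul, one_smul]
      rw [h]
      exact hadd _ ih _ hα₁
  have hmulZ : ∀ j : ℤ, 0 ≤ j → j • α ∈ S := by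
    intro j hj
    lift j to ℕ using hj
    exact hmulN j
  have hsumα : 0 ≤ ∑ t, α t := Finset.sum_nonneg fun t _ => hα0 t
  intro l hl1 hl2 b hb0 hbα hsum
  have hble : ∀ t, b t ≤ α t := fun t => hbα.le t
  have hb0' : ∀ t, 0 ≤ b t := fun t => hb0 t
  have hsumsub : ∑ t, (α t - b t) = ∑ t, α t - ∑ t, b t := Finset.sum_sub_distrib _ _
  have hsumb : ∑ t, b t ≤ (∑ t, α t) - 2 := by linarith
  -- the strict inequality part
  have hlt : β - l • α + b < β := by
    rw [Pi.lt_def]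
    constructor
    · intro t
      simp only [Pi.add_apply, Pi.sub_apply, Pi.smul_apply, smul_eq_mul]
      have h1 : α t ≤ l * α t := le_mul_of_one_le_left (hα0 t) hl1
      have h2 := hble t
      linarith
    · by_contra h
      push_neg at h
      have h' : ∀ t, α t ≤ b t := by
        intro t
        have ht := h t
        simp only [Pi.add_apply, Pi.sub_apply, Pi.smul_apply, smul_eq_mul] at ht
        have h1 : α t ≤ l * α t := le_mul_of_one_le_left (hα0 t) hl1
        linarith
      have : ∑ t, (α t - b t) ≤ 0 :=
        Finset.sum_nonpos fun t _ => by linarith [h' t]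
      linarith
  refine ⟨?_, hlt⟩
  show Delta S (β - 1 - (β - l • α + b)) = ∅
  rw [Set.eq_empty_iff_forall_notMem]
  rintro c ⟨hcS, i, hci, hcj⟩
  have key : ∀ t, (β - 1 - (β - l • α + b)) t = l * α t - b t - 1 := by
    intro t
    simp only [Pi.sub_apply, Pi.add_apply, Pi.one_apply, Pi.smul_apply, smul_eq_mul]
    ring
  rw [key i] at hci
  have hcj' : ∀ j, j ≠ i → l * α j - b j ≤ c j := by
    intro j hj
    have := hcj j hj
    rw [key j] at this
    omega
  set d : Vec s := c ⊓ (l • α) with hd_def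
  have hdS : d ∈ S := hmin c hcS _ (hmulZ l (by omega))
  have hdt : ∀ t, d t = min (c t) (l * α t) := by
    intro t
    simp [hd_def, Pi.inf_apply]
  have hdi : d i = l * α i - b i - 1 := by
    rw [hdt i, hci]
    have := hb0' i
    omega
  have hdj : ∀ j, j ≠ i → l * α j - b j ≤ d j := by
    intro j hj
    rw [hdt j]
    have h1 := hcj' j hj
    have h2 := hb0' j
    omega
  have hdle : ∀ t, d t ≤ l * α t := by
    intro t
    rw [hdt t]
    omega
  have hdsum : (l - 1) * ∑ t, α t + 1 ≤ ∑ t, d t := by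
    have h1 : ∀ t ∈ Finset.univ, l * α t - b t - (if t = i then 1 else 0) ≤ d t := by
      intro t _
      by_cases ht : t = i
      · subst ht; simp [hdi]
      · simpa [ht] using hdj t ht
    have h2 := Finset.sum_le_sum h1
    have h3 : ∑ t, (l * α t - b t - (if t = i then (1:ℤ) else 0))
        = l * ∑ t, α t - ∑ t, b t - 1 := by
      rw [Finset.sum_sub_distrib, Finset.sum_sub_distrib, ← Finset.mul_sum]
      simp
    have h4 : (l - 1) * ∑ t, α t = l * ∑ t, α t - ∑ t, α t := by ring
    rw [h3] at h2
    linarith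
  have hd0 : d ≠ 0 := by
    intro h
    rw [h] at hdsum
    simp only [Pi.zero_apply, Finset.sum_const_zero] at hdsum
    have : (l - 1) * ∑ t, α t ≥ 0 := mul_nonneg (by omega) hsumα
    linarith
  have hαd : ∀ t, α t ≤ d t := fun t => hα₃ d hdS hd0 t
  have hd0' : ∀ t, 0 ≤ d t := fun t => le_trans (by linarith [hαpos t]) (hαd t)
  -- greatest k with 1 ≤ k and k • α ≤ d
  have hbdd : ∃ bnd : ℤ, ∀ z : ℤ, (1 ≤ z ∧ ∀ t, z * α t ≤ d t) → z ≤ bnd := by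
    refine ⟨l, fun z hz => ?_⟩
    obtain ⟨hz1, hz2⟩ := hz
    have t0 : Fin s := ⟨0, hs⟩
    have h1 := hz2 t0
    have h2 := hdle t0
    have h3 := hαpos t0
    nlinarith
  obtain ⟨k, ⟨hk1, hk2⟩, hkmax⟩ :=
    Int.exists_greatest_of_bdd hbdd ⟨1, le_refl 1, fun t => by simpa using hαd t⟩
  have hkl : k ≤ l - 1 := by
    have t0 : Fin s := ⟨0, hs⟩
    have hkle : k ≤ l := by
      have h1 := hk2 t0
      have h2 := hdle t0
      have h3 := hαpos t0
      nlinarith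
    rcases lt_or_ge k l with h | h
    · omega
    · exfalso
      have hkeq : k = l := le_antisymm hkle h
      subst hkeq
      have h1 := hk2 i
      have h2 := hb0' i
      omega
  have hnk : ∃ t, d t < (k + 1) * α t := by
    by_contra h
    push_neg at h
    have := hkmax (k + 1) ⟨by omega, h⟩
    omega
  set e : Vec s := d ⊓ ((k + 1) • α) with he_def
  have heS : e ∈ S := hmin d hdS _ (hmulZ (k + 1) (by omega))
  have het : ∀ t, e t = min (d t) ((k + 1) * α t) := by
    intro t
    simp [he_def, Pi.inf_apply]
  have hkα : ∀ t, k * α t ≤ (k + 1) * α t := by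
    intro t
    have := hα0 t
    nlinarith
  -- e ∈ Rset α (k+1)
  have heR : e ∈ Rset α (k + 1) := by
    refine ⟨?_, ?_, ?_⟩
    · intro t
      simp only [Pi.zero_apply]
      rw [het t]
      have h1 := hd0' t
      have h2 : 0 ≤ (k + 1) * α t := mul_nonneg (by omega) (hα0 t)
      omega
    · rw [Pi.lt_def]
      constructor
      · intro t
        simp only [Pi.smul_apply, smul_eq_mul]
        rw [het t]
        have h1 := hk2 t
        have h2 := hkα t
        have h3 : (k + 1 - 1) * α t = k * α t := by ring
        omega
      · have hwit : ∃ t, k * α t < d t := by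
          by_contra h
          push_neg at h
          have hsle : ∑ t, d t ≤ ∑ t, k * α t := Finset.sum_le_sum fun t _ => h t
          rw [← Finset.mul_sum] at hsle
          have : k * ∑ t, α t ≤ (l - 1) * ∑ t, α t :=
            mul_le_mul_of_nonneg_right (by omega) hsumα
          linarith
        obtain ⟨t, ht⟩ := hwit
        refine ⟨t, ?_⟩
        simp only [Pi.smul_apply, smul_eq_mul]
        rw [het t]
        have h2 : k * α t < (k + 1) * α t := by nlinarith [hαpos t]
        have h3 : (k + 1 - 1) * α t = k * α t := by ring
        omega
    · rw [Pi.lt_def]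
      constructor
      · intro t
        simp only [Pi.smul_apply, smul_eq_mul]
        rw [het t]
        omega
      · obtain ⟨t, ht⟩ := hnk
        refine ⟨t, ?_⟩
        simp only [Pi.smul_apply, smul_eq_mul]
        rw [het t]
        omega
  have := hn₃ (k + 1) (by omega) ⟨e, heR, heS⟩
  omega
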